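/- arXiv:2508.13928 — 10 statements merged into one kernel-verified Lean document; each statement's English description precedes it below -/
import Mathlib

section
/- Soundness of the rule (ι₂²⇒): if Γ semantically entails Δ ∪ {φ[Y:=B]}, and Γ semantically entails Δ ∪ {φ[Y:=C]}, and Γ ∪ {B = C} semantically entails Δ, then Γ ∪ {(λX ψ)(ιY φ)} semantically entails Δ, where entailment is: every model-assignment pair satisfying all of the antecedent satisfies some member of the succedent. -/
/-- Multiple-conclusion semantic entailment. -/
def Entails {W Form : Type*} (Sat : W → Form → Prop) (Γ Δ : Set Form) : Prop :=
  ∀ w : W, (∀ γ ∈ Γ, Sat w γ) → ∃ δ ∈ Δ, Sat w δ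

/-- soundness of the rule (ι₂²⇒). -/
theorem stmt2_iota22_left_sound
    {W Form R : Type*} (Sat : W → Form → Prop)
    (Γ Δ : Set Form)
    (Lform φ φB φC eqBC : Form) (ψ φYX : Form)
    (updX updY : W → R → W) (valB valC : W → R)
    -- semantic clause for `(λX ψ)(ιY φ)` (only the direction needed here)
    (hL : ∀ w, Sat w Lform →
      ∃ O : R, Sat (updX w O) ψ ∧ Sat (updX w O) φYX ∧
        ∀ O' : R, Sat (updY w O') φ → O' = O)
    -- semantic clause for the identity `B = C`
    (heq : ∀ w, Sat w eqBC ↔ valB w = valC w)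
    -- substitution property for the parameters `B` and `C`
    (hsubB : ∀ w, Sat w φB ↔ Sat (updY w (valB w)) φ)
    (hsubC : ∀ w, Sat w φC ↔ Sat (updY w (valC w)) φ)
    -- the three premises of the rule
    (h1 : Entails Sat Γ (Δ ∪ {φB}))
    (h2 : Entails Sat Γ (Δ ∪ {φC}))
    (h3 : Entails Sat (Γ ∪ {eqBC}) Δ) :
    Entails Sat (Γ ∪ {Lform}) Δ := by
  intro w hw
  have hΓ : ∀ γ ∈ Γ, Sat w γ := fun γ hγ => hw γ (Or.inl hγ)
  have hLf : Sat w Lform := hw Lform (Or.inr rfl)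
  obtain ⟨O, _, _, huniq⟩ := hL w hLf
  rcases h1 w hΓ with ⟨δ, hδ, hs⟩
  rcases hδ with hδ | hδ
  · exact ⟨δ, hδ, hs⟩
  · rcases h2 w hΓ with ⟨δ', hδ', hs'⟩
    rcases hδ' with hδ' | hδ'
    · exact ⟨δ', hδ', hs'⟩
    · subst hδ hδ'
      have hB := huniq _ ((hsubB w).mp hs)
      have hC := huniq _ ((hsubC w).mp hs')
      have : Sat w eqBC := (heq w).mpr (hB.trans hC.symm)
      exact h3 w (fun γ hγ => hγ.elim (hΓ γ) (fun h => h ▸ this))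
end

section
/- Soundness of the rule (⇒ι²): if Γ ⊨ Δ ∪ {φ[Y:=B]}, Γ ⊨ Δ ∪ {ψ[X:=B]}, and for a fresh relational parameter A (not occurring in Γ, Δ, φ), Γ ∪ {φ[Y:=A]} ⊨ Δ ∪ {A = B}, then Γ ⊨ Δ ∪ {(λX ψ)(ιY φ)}. -/
/-- soundness of the rule (⇒ι²), with a fresh relational
parameter `A` not occurring in Γ, Δ, φ. -/
theorem stmt3_iota2_right_sound
    {W Form R : Type*} (Sat : W → Form → Prop)
    (Γ Δ : Set Form)
    (Lform φ ψ φB ψB φA eqAB φYX : Form)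
    (updX updY : W → R → W) (setA : W → R → W) (valA valB : W → R)
    -- semantic clause for `(λX ψ)(ιY φ)`
    (hL : ∀ w, Sat w Lform ↔
      ∃ O : R, Sat (updX w O) ψ ∧ Sat (updX w O) φYX ∧
        ∀ O' : R, Sat (updY w O') φ → O' = O)
    -- substitution properties
    (hsubφB : ∀ w, Sat w φB ↔ Sat (updY w (valB w)) φ)
    (hsubψB : ∀ w, Sat w ψB ↔ Sat (updX w (valB w)) ψ)
    (hsubφA : ∀ w, Sat w φA ↔ Sat (updY w (valA w)) φ)
    (hsubφYX : ∀ w O, Sat (updX w O) φYX ↔ Sat (updY w O) φ)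
    -- semantic clause for `A = B`
    (heqAB : ∀ w, Sat w eqAB ↔ valA w = valB w)
    -- freshness of `A`: its value can be varied arbitrarily without
    -- affecting the satisfaction of Γ, Δ, φ, and without affecting `valB`
    (hvalA : ∀ w O, valA (setA w O) = O)
    (hvalB : ∀ w O, valB (setA w O) = valB w)
    (hfreshΓ : ∀ w O, ∀ γ ∈ Γ, (Sat (setA w O) γ ↔ Sat w γ))
    (hfreshΔ : ∀ w O, ∀ δ ∈ Δ, (Sat (setA w O) δ ↔ Sat w δ))
    (hfreshφ : ∀ w O O', Sat (updY (setA w O) O') φ ↔ Sat (updY w O') φ)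
    -- the three premises of the rule
    (h1 : Entails Sat Γ (Δ ∪ {φB}))
    (h2 : Entails Sat Γ (Δ ∪ {ψB}))
    (h3 : Entails Sat (Γ ∪ {φA}) (Δ ∪ {eqAB})) :
    Entails Sat Γ (Δ ∪ {Lform}) := by
  intro w hΓ
  by_cases hΔ : ∃ δ ∈ Δ, Sat w δ
  · obtain ⟨δ, hδ, hs⟩ := hΔ
    exact ⟨δ, Or.inl hδ, hs⟩
  · refine ⟨Lform, Or.inr rfl, (hL w).2 ?_⟩
    -- get φB
    obtain ⟨δ1, hδ1, hs1⟩ := h1 w hΓ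
    rcases hδ1 with hδ1 | hδ1
    · exact absurd ⟨δ1, hδ1, hs1⟩ hΔ
    · obtain ⟨δ2, hδ2, hs2⟩ := h2 w hΓ
      rcases hδ2 with hδ2 | hδ2
      · exact absurd ⟨δ2, hδ2, hs2⟩ hΔ
      · subst hδ1; subst hδ2
        refine ⟨valB w, (hsubψB w).1 hs2, (hsubφYX w _).2 ((hsubφB w).1 hs1), ?_⟩
        intro O' hO'
        have hΓ' : ∀ γ ∈ Γ ∪ {φA}, Sat (setA w O') γ := by
          intro γ hγ
          rcases hγ with hγ | hγ
          · exact (hfreshΓ w O' γ hγ).2 (hΓ γ hγ)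
          · subst hγ
            rw [hsubφA, hvalA]
            exact (hfreshφ w O' O').2 hO'
        obtain ⟨δ3, hδ3, hs3⟩ := h3 (setA w O') hΓ'
        rcases hδ3 with hδ3 | hδ3
        · exact absurd ⟨δ3, hδ3, (hfreshΔ w O' δ3 hδ3).1 hs3⟩ hΔ
        · subst hδ3
          have := (heqAB _).1 hs3
          rwa [hvalA, hvalB] at this
end

section
/- Soundness of the rule (ι₁²⇒): if Γ ∪ {φ[Y:=A], ψ[X:=A]} ⊨ Δ for a fresh relational parameter A not occurring in Γ, Δ, φ, ψ, then Γ ∪ {(λX ψ)(ιY φ)} ⊨ Δ. -/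
/-- soundness of the rule (ι₁²⇒), with a fresh relational
parameter `A` not occurring in Γ, Δ, φ, ψ. -/
theorem stmt4_iota21_left_sound
    {W Form R : Type*} (Sat : W → Form → Prop)
    (Γ Δ : Set Form)
    (Lform φ ψ φA ψA φYX : Form)
    (updX updY : W → R → W) (setA : W → R → W) (valA : W → R)
    -- semantic clause for `(λX ψ)(ιY φ)` (only the direction needed here)
    (hL : ∀ w, Sat w Lform →
      ∃ O : R, Sat (updX w O) ψ ∧ Sat (updX w O) φYX ∧
        ∀ O' : R, Sat (updY w O') φ → O' = O)
    -- substitution properties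
    (hsubφA : ∀ w, Sat w φA ↔ Sat (updY w (valA w)) φ)
    (hsubψA : ∀ w, Sat w ψA ↔ Sat (updX w (valA w)) ψ)
    (hsubφYX : ∀ w O, Sat (updX w O) φYX ↔ Sat (updY w O) φ)
    -- freshness of `A` w.r.t. Γ, Δ, φ, ψ
    (hvalA : ∀ w O, valA (setA w O) = O)
    (hfreshΓ : ∀ w O, ∀ γ ∈ Γ, (Sat (setA w O) γ ↔ Sat w γ))
    (hfreshΔ : ∀ w O, ∀ δ ∈ Δ, (Sat (setA w O) δ ↔ Sat w δ))
    (hfreshφ : ∀ w O O', Sat (updY (setA w O) O') φ ↔ Sat (updY w O') φ)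
    (hfreshψ : ∀ w O O', Sat (updX (setA w O) O') ψ ↔ Sat (updX w O') ψ)
    -- the premise of the rule
    (h1 : Entails Sat (Γ ∪ {φA, ψA}) Δ) :
    Entails Sat (Γ ∪ {Lform}) Δ := by
  intro w hw
  obtain ⟨O, hψ, hφYX, _⟩ := hL w (hw Lform (Or.inr rfl))
  have hφY : Sat (updY w O) φ := (hsubφYX w O).mp hφYX
  obtain ⟨δ, hδΔ, hδ⟩ := h1 (setA w O) (by
    rintro γ (hγ | hγ | hγ)
    · exact (hfreshΓ w O γ hγ).mpr (hw γ (Or.inl hγ))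
    · subst hγ
      rw [hsubφA, hvalA, hfreshφ]; exact hφY
    · rw [Set.mem_singleton_iff] at hγ; subst hγ
      rw [hsubψA, hvalA, hfreshψ]; exact hψ)
  exact ⟨δ, hδΔ, (hfreshΔ w O δ hδΔ).mp hδ⟩
end

section
/- Soundness of the second-order identity right rule (⇒=²): if for fresh individual parameters a₁,…,aₙ, Γ ∪ {X(a₁,…,aₙ)} ⊨ Δ ∪ {Y(a₁,…,aₙ)} and Γ ∪ {Y(a₁,…,aₙ)} ⊨ Δ ∪ {X(a₁,…,aₙ)}, then Γ ⊨ Δ ∪ {X = Y}, where X = Y is interpreted as v(X) = v(Y) with v(X), v(Y) : Set (Fin n → D). -/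
/-- soundness of the right rule (⇒=²) for second-order identity,
with fresh individual parameters a₁,…,aₙ. `tupA w` is the tuple
`(v a₁, …, v aₙ)` at the model-assignment pair `w`; `setA w t` reassigns the
parameters a₁,…,aₙ so that this tuple becomes `t`. -/
theorem stmt5_soi_right_sound
    {W Form : Type*} {D : Type*} {n : ℕ} (Sat : W → Form → Prop)
    (Γ Δ : Set Form)
    (atomXa atomYa eqXY : Form)
    (valX valY : W → Set (Fin n → D))
    (tupA : W → (Fin n → D)) (setA : W → (Fin n → D) → W)
    -- semantic clauses for the atoms X(a₁,…,aₙ), Y(a₁,…,aₙ) and for X = Y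
    (hatomX : ∀ w, Sat w atomXa ↔ tupA w ∈ valX w)
    (hatomY : ∀ w, Sat w atomYa ↔ tupA w ∈ valY w)
    (heq : ∀ w, Sat w eqXY ↔ valX w = valY w)
    -- freshness: a₁,…,aₙ may be reassigned to realize any tuple, without
    -- affecting v(X), v(Y) or the satisfaction of formulas in Γ, Δ
    (htup : ∀ w t, tupA (setA w t) = t)
    (hvalX : ∀ w t, valX (setA w t) = valX w)
    (hvalY : ∀ w t, valY (setA w t) = valY w)
    (hfreshΓ : ∀ w t, ∀ γ ∈ Γ, (Sat (setA w t) γ ↔ Sat w γ))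
    (hfreshΔ : ∀ w t, ∀ δ ∈ Δ, (Sat (setA w t) δ ↔ Sat w δ))
    -- the two premises of the rule
    (h1 : Entails Sat (Γ ∪ {atomXa}) (Δ ∪ {atomYa}))
    (h2 : Entails Sat (Γ ∪ {atomYa}) (Δ ∪ {atomXa})) :
    Entails Sat Γ (Δ ∪ {eqXY}) := by
  intro w hΓ
  by_cases hΔ : ∃ δ ∈ Δ, Sat w δ
  · obtain ⟨δ, hδ, hs⟩ := hΔ
    exact ⟨δ, Or.inl hδ, hs⟩
  · push_neg at hΔ
    refine ⟨eqXY, Or.inr rfl, (heq w).2 ?_⟩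
    ext t
    constructor
    · intro ht
      have hx : Sat (setA w t) atomXa := (hatomX _).2 (by rw [htup, hvalX]; exact ht)
      obtain ⟨δ, hδ, hs⟩ := h1 (setA w t) (by
        rintro γ (hγ | rfl)
        · exact (hfreshΓ w t γ hγ).2 (hΓ γ hγ)
        · exact hx)
      rcases hδ with hδ | rfl
      · exact absurd ((hfreshΔ w t δ hδ).1 hs) (hΔ δ hδ)
      · have := (hatomY _).1 hs
        rwa [htup, hvalY] at this
    · intro ht
      have hy : Sat (setA w t) atomYa := (hatomY _).2 (by rw [htup, hvalY]; exact ht)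
      obtain ⟨δ, hδ, hs⟩ := h2 (setA w t) (by
        rintro γ (hγ | rfl)
        · exact (hfreshΓ w t γ hγ).2 (hΓ γ hγ)
        · exact hy)
      rcases hδ with hδ | rfl
      · exact absurd ((hfreshΔ w t δ hδ).1 hs) (hΔ δ hδ)
      · have := (hatomX _).1 hs
        rwa [htup, hvalX] at this
end

section
/- Given a sequent calculus with axiom schema φ ⇒ φ, weakening on both sides, cut, and the rule (=²⇒) (from Γ ⇒ Δ, 𝒜[X:=B], 𝒜[X:=C] and 𝒜[X:=B], 𝒜[X:=C], Γ ⇒ Δ infer B = C, Γ ⇒ Δ, for atomic 𝒜 — here instantiated with atoms), the rule (=²−) is derivable: if 𝒜[X:=C], Γ ⇒ Δ is derivable, then B = C, 𝒜[X:=B], Γ ⇒ Δ is derivable. -/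
namespace Stmt9

/-- Formulas: atomic formulas `𝒜[X:=B]` (an atomic schema index applied to a
relational parameter), second-order identities `B = C`, and other formulas. -/
inductive Form (RPar Other : Type) : Type where
  | atom : ℕ → RPar → Form RPar Other   -- `atom i B` is the atom 𝒜ᵢ[X:=B]
  | eq : RPar → RPar → Form RPar Other
  | other : Other → Form RPar Other

variable {RPar Other : Type}

/-- Sequent calculus with the axiom schema, weakening, cut, and the
second-order identity left rule (=²⇒) for atomic formulas. -/
inductive Derivable :
    Multiset (Form RPar Other) → Multiset (Form RPar Other) → Prop where
  | ax (φ : Form RPar Other) : Derivable {φ} {φ}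
  | wL (φ : Form RPar Other) {Γ Δ} :
      Derivable Γ Δ → Derivable (φ ::ₘ Γ) Δ
  | wR (φ : Form RPar Other) {Γ Δ} :
      Derivable Γ Δ → Derivable Γ (φ ::ₘ Δ)
  | cut (φ : Form RPar Other) {Γ Δ P S} :
      Derivable Γ (φ ::ₘ Δ) → Derivable (φ ::ₘ P) S →
      Derivable (Γ + P) (Δ + S)
  | eqL (i : ℕ) (B C : RPar) {Γ Δ} :
      Derivable Γ (Form.atom i B ::ₘ Form.atom i C ::ₘ Δ) →
      Derivable (Form.atom i B ::ₘ Form.atom i C ::ₘ Γ) Δ →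
      Derivable (Form.eq B C ::ₘ Γ) Δ

/-- Proposition 1, second part: the rule (=²−) is derivable:
if `𝒜[X:=C], Γ ⇒ Δ` is derivable, so is `B = C, 𝒜[X:=B], Γ ⇒ Δ`. -/
theorem eq2_minus_derivable
    (i : ℕ) (B C : RPar) (Γ Δ : Multiset (Form RPar Other))
    (h : Derivable (Form.atom i C ::ₘ Γ) Δ) :
    Derivable (Form.eq B C ::ₘ Form.atom i B ::ₘ Γ) Δ := by
  have key : Derivable (Form.eq B C ::ₘ ({Form.atom i B} : Multiset (Form RPar Other)))
      ({Form.atom i C} : Multiset (Form RPar Other)) := by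
    apply Derivable.eqL i B C
    · have this1 := Derivable.wR (Form.atom i C) (Derivable.wR (Form.atom i C)
        (Derivable.ax (Other := Other) (Form.atom i B)))
      have heq : (Form.atom i C ::ₘ Form.atom i C ::ₘ ({Form.atom i B} : Multiset (Form RPar Other)))
          = Form.atom i B ::ₘ Form.atom i C ::ₘ {Form.atom i C} := by
        show Form.atom i C ::ₘ Form.atom i C ::ₘ Form.atom i B ::ₘ 0
          = Form.atom i B ::ₘ Form.atom i C ::ₘ Form.atom i C ::ₘ 0
        rw [Multiset.cons_swap (Form.atom i C) (Form.atom i B),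
          Multiset.cons_swap (Form.atom i C) (Form.atom i B)]
      rwa [heq] at this1
    · have this2 := Derivable.wL (Form.atom i B) (Derivable.wL (Form.atom i B)
        (Derivable.ax (Other := Other) (Form.atom i C)))
      have heq : (Form.atom i B ::ₘ Form.atom i B ::ₘ ({Form.atom i C} : Multiset (Form RPar Other)))
          = Form.atom i B ::ₘ Form.atom i C ::ₘ {Form.atom i B} := by
        show Form.atom i B ::ₘ Form.atom i B ::ₘ Form.atom i C ::ₘ 0
          = Form.atom i B ::ₘ Form.atom i C ::ₘ Form.atom i B ::ₘ 0
        rw [Multiset.cons_swap (Form.atom i B) (Form.atom i C)]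
      rwa [heq] at this2
  have hc := Derivable.cut (Form.atom i C) (Γ := Form.eq B C ::ₘ {Form.atom i B})
    (Δ := 0) (P := Γ) (S := Δ) (by simpa using key) h
  simpa using hc

end Stmt9
end

section
/- In a maximal consistent extended sequent Γ ⇒ Δ (S-consistent, internally maximal, with the witness property), the biconditional case of the truth lemma holds: if the calculus contains the rules (↔⇒) and (⇒↔), then φ ↔ ψ ∈ Γ implies (φ ∈ Γ ∧ ψ ∈ Γ) ∨ (φ ∈ Δ ∧ ψ ∈ Δ), and φ ↔ ψ ∈ Δ implies (φ ∈ Γ ∧ ψ ∈ Δ) ∨ (ψ ∈ Γ ∧ φ ∈ Δ). -/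
namespace Stmt12

variable {Form : Type*}

/-- S-consistency of an extended sequent (Γ, Δ): no finite sub-sequent is
derivable. -/
def SCon (Der : Finset Form → Finset Form → Prop) (Γ Δ : Set Form) : Prop :=
  ∀ Θ Λ : Finset Form, ↑Θ ⊆ Γ → ↑Λ ⊆ Δ → ¬ Der Θ Λ

/-- Internal S-maximality with respect to a formula χ. -/
def InternallyMaximalAt (Der : Finset Form → Finset Form → Prop)
    (Γ Δ : Set Form) (χ : Form) : Prop :=
  (χ ∉ Γ → ¬ SCon Der (Γ ∪ {χ}) Δ) ∧ (χ ∉ Δ → ¬ SCon Der Γ (Δ ∪ {χ}))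

lemma notL [DecidableEq Form] {Der : Finset Form → Finset Form → Prop}
    {Γ Δ : Set Form}
    (hweak : ∀ {Θ Λ Θ' Λ' : Finset Form}, Der Θ Λ → Θ ⊆ Θ' → Λ ⊆ Λ' → Der Θ' Λ')
    (hmax : ∀ χ : Form, InternallyMaximalAt Der Γ Δ χ)
    {χ : Form} (h : χ ∉ Γ) :
    ∃ Θ Λ : Finset Form, ↑Θ ⊆ Γ ∧ ↑Λ ⊆ Δ ∧ Der (insert χ Θ) Λ := by
  have := (hmax χ).1 h
  simp only [SCon, not_forall, not_not] at this
  obtain ⟨Θ, Λ, hΘ, hΛ, hd⟩ := this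
  refine ⟨Θ.erase χ, Λ, ?_, hΛ, hweak hd ?_ (le_refl _)⟩
  · intro x hx
    simp only [Finset.coe_erase, Set.mem_diff, Set.mem_singleton_iff] at hx
    rcases hΘ hx.1 with h' | h'
    · exact h'
    · exact absurd h' hx.2
  · intro x hx
    by_cases hxχ : x = χ
    · simp [hxχ]
    · exact Finset.mem_insert_of_mem (Finset.mem_erase.2 ⟨hxχ, hx⟩)

lemma notR [DecidableEq Form] {Der : Finset Form → Finset Form → Prop}
    {Γ Δ : Set Form}
    (hweak : ∀ {Θ Λ Θ' Λ' : Finset Form}, Der Θ Λ → Θ ⊆ Θ' → Λ ⊆ Λ' → Der Θ' Λ')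
    (hmax : ∀ χ : Form, InternallyMaximalAt Der Γ Δ χ)
    {χ : Form} (h : χ ∉ Δ) :
    ∃ Θ Λ : Finset Form, ↑Θ ⊆ Γ ∧ ↑Λ ⊆ Δ ∧ Der Θ (insert χ Λ) := by
  have := (hmax χ).2 h
  simp only [SCon, not_forall, not_not] at this
  obtain ⟨Θ, Λ, hΘ, hΛ, hd⟩ := this
  refine ⟨Θ, Λ.erase χ, hΘ, ?_, hweak hd (le_refl _) ?_⟩
  · intro x hx
    simp only [Finset.coe_erase, Set.mem_diff, Set.mem_singleton_iff] at hx
    rcases hΛ hx.1 with h' | h'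
    · exact h'
    · exact absurd h' hx.2
  · intro x hx
    by_cases hxχ : x = χ
    · simp [hxχ]
    · exact Finset.mem_insert_of_mem (Finset.mem_erase.2 ⟨hxχ, hx⟩)

/-- the biconditional case of the truth lemma for a maximal
consistent extended sequent. -/
theorem stmt12_iff_truth_lemma [DecidableEq Form]
    (Der : Finset Form → Finset Form → Prop)
    (iff : Form → Form → Form)
    -- closure under weakening
    (hweak : ∀ {Θ Λ Θ' Λ' : Finset Form}, Der Θ Λ → Θ ⊆ Θ' → Λ ⊆ Λ' → Der Θ' Λ')
    -- the rule (↔⇒)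
    (hiffL : ∀ (φ ψ : Form) (Θ Λ : Finset Form),
      Der Θ (insert φ (insert ψ Λ)) → Der (insert φ (insert ψ Θ)) Λ →
      Der (insert (iff φ ψ) Θ) Λ)
    -- the rule (⇒↔)
    (hiffR : ∀ (φ ψ : Form) (Θ Λ : Finset Form),
      Der (insert φ Θ) (insert ψ Λ) → Der (insert ψ Θ) (insert φ Λ) →
      Der Θ (insert (iff φ ψ) Λ))
    (Γ Δ : Set Form)
    (hcon : SCon Der Γ Δ)
    (hmax : ∀ χ : Form, InternallyMaximalAt Der Γ Δ χ)
    (φ ψ : Form) :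
    (iff φ ψ ∈ Γ → (φ ∈ Γ ∧ ψ ∈ Γ) ∨ (φ ∈ Δ ∧ ψ ∈ Δ)) ∧
    (iff φ ψ ∈ Δ → (φ ∈ Γ ∧ ψ ∈ Δ) ∨ (ψ ∈ Γ ∧ φ ∈ Δ)) := by
  constructor
  · intro hmem
    by_contra hcontra
    push_neg at hcontra
    obtain ⟨h1, h2⟩ := hcontra
    -- premise 2: φ, ψ, Θ ⇒ Λ  (some of φ, ψ is not in Γ)
    have hnotΓ : φ ∉ Γ ∨ ψ ∉ Γ := by tauto
    have prem2 : ∃ Θ Λ : Finset Form, ↑Θ ⊆ Γ ∧ ↑Λ ⊆ Δ ∧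
        Der (insert φ (insert ψ Θ)) Λ := by
      rcases hnotΓ with h | h <;>
        obtain ⟨Θ, Λ, hΘ, hΛ, hd⟩ := notL hweak hmax h <;>
        exact ⟨Θ, Λ, hΘ, hΛ, hweak hd (by
          intro x hx
          rcases Finset.mem_insert.1 hx with rfl | hx
          · simp
          · exact Finset.mem_insert_of_mem (Finset.mem_insert_of_mem hx)) (le_refl _)⟩
    -- premise 1: Θ ⇒ φ, ψ, Λ  (some of φ, ψ is not in Δ)
    have hnotΔ : φ ∉ Δ ∨ ψ ∉ Δ := by tauto
    have prem1 : ∃ Θ Λ : Finset Form, ↑Θ ⊆ Γ ∧ ↑Λ ⊆ Δ ∧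
        Der Θ (insert φ (insert ψ Λ)) := by
      rcases hnotΔ with h | h <;>
        obtain ⟨Θ, Λ, hΘ, hΛ, hd⟩ := notR hweak hmax h <;>
        exact ⟨Θ, Λ, hΘ, hΛ, hweak hd (le_refl _) (by
          intro x hx
          rcases Finset.mem_insert.1 hx with rfl | hx
          · simp
          · exact Finset.mem_insert_of_mem (Finset.mem_insert_of_mem hx))⟩
    obtain ⟨Θ₁, Λ₁, hΘ₁, hΛ₁, hd₁⟩ := prem1
    obtain ⟨Θ₂, Λ₂, hΘ₂, hΛ₂, hd₂⟩ := prem2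
    have hfin : Der (insert (iff φ ψ) (Θ₁ ∪ Θ₂)) (Λ₁ ∪ Λ₂) := by
      apply hiffL
      · exact hweak hd₁ Finset.subset_union_left
          (Finset.insert_subset_insert _ (Finset.insert_subset_insert _ Finset.subset_union_left))
      · exact hweak hd₂
          (Finset.insert_subset_insert _ (Finset.insert_subset_insert _ Finset.subset_union_right))
          Finset.subset_union_right
    refine hcon _ _ ?_ ?_ hfin
    · intro x hx; simp at hx
      rcases hx with rfl | hx | hx
      · exact hmem
      · exact hΘ₁ hx
      · exact hΘ₂ hx
    · intro x hx; simp at hx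
      rcases hx with hx | hx
      · exact hΛ₁ hx
      · exact hΛ₂ hx
  · intro hmem
    by_contra hcontra
    push_neg at hcontra
    obtain ⟨h1, h2⟩ := hcontra
    -- premise 1: φ, Θ ⇒ ψ, Λ  (φ ∉ Γ or ψ ∉ Δ)
    have prem1 : ∃ Θ Λ : Finset Form, ↑Θ ⊆ Γ ∧ ↑Λ ⊆ Δ ∧
        Der (insert φ Θ) (insert ψ Λ) := by
      by_cases hφ : φ ∈ Γ
      · obtain ⟨Θ, Λ, hΘ, hΛ, hd⟩ := notR hweak hmax (h1 hφ)
        exact ⟨Θ, Λ, hΘ, hΛ, hweak hd (Finset.subset_insert _ _) (le_refl _)⟩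
      · obtain ⟨Θ, Λ, hΘ, hΛ, hd⟩ := notL hweak hmax hφ
        exact ⟨Θ, Λ, hΘ, hΛ, hweak hd (le_refl _) (Finset.subset_insert _ _)⟩
    -- premise 2: ψ, Θ ⇒ φ, Λ  (ψ ∉ Γ or φ ∉ Δ)
    have prem2 : ∃ Θ Λ : Finset Form, ↑Θ ⊆ Γ ∧ ↑Λ ⊆ Δ ∧
        Der (insert ψ Θ) (insert φ Λ) := by
      by_cases hψ : ψ ∈ Γ
      · obtain ⟨Θ, Λ, hΘ, hΛ, hd⟩ := notR hweak hmax (h2 hψ)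
        exact ⟨Θ, Λ, hΘ, hΛ, hweak hd (Finset.subset_insert _ _) (le_refl _)⟩
      · obtain ⟨Θ, Λ, hΘ, hΛ, hd⟩ := notL hweak hmax hψ
        exact ⟨Θ, Λ, hΘ, hΛ, hweak hd (le_refl _) (Finset.subset_insert _ _)⟩
    obtain ⟨Θ₁, Λ₁, hΘ₁, hΛ₁, hd₁⟩ := prem1
    obtain ⟨Θ₂, Λ₂, hΘ₂, hΛ₂, hd₂⟩ := prem2
    have hfin : Der (Θ₁ ∪ Θ₂) (insert (iff φ ψ) (Λ₁ ∪ Λ₂)) := by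
      apply hiffR
      · exact hweak hd₁ (Finset.insert_subset_insert _ Finset.subset_union_left)
          (Finset.insert_subset_insert _ Finset.subset_union_left)
      · exact hweak hd₂ (Finset.insert_subset_insert _ Finset.subset_union_right)
          (Finset.insert_subset_insert _ Finset.subset_union_right)
    refine hcon _ _ ?_ ?_ hfin
    · intro x hx; simp at hx
      rcases hx with hx | hx
      · exact hΘ₁ hx
      · exact hΘ₂ hx
    · intro x hx; simp at hx
      rcases hx with rfl | hx | hx
      · exact hmem
      · exact hΛ₁ hx
      · exact hΛ₂ hx

end Stmt12
end

section
/- Truth-lemma case for second-order existential quantification: let (Γ, Δ) be a maximal consistent extended sequent with the witness property, and let ⟦·⟧ be the canonical interpretation where v(K) for each relational constant K lies in the domain G of the general model and where the induction hypothesis holds for φ-instances. If ∃X φ ∈ Γ then M,v ⊨ ∃X φ; and if M,v ⊨ ∃X φ (satisfaction defined by ∃ O ∈ G, M,v[X:=O] ⊨ φ) then ∃X φ ∉ Δ. -/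
namespace Stmt13

variable {Form : Type*}

/-- S-consistency of an extended sequent (Γ, Δ): no finite sub-sequent is
derivable. -/
def SCon (Der : Finset Form → Finset Form → Prop) (Γ Δ : Set Form) : Prop :=
  ∀ Θ Λ : Finset Form, ↑Θ ⊆ Γ → ↑Λ ⊆ Δ → ¬ Der Θ Λ

/-- truth-lemma case for the second-order existential
quantifier in a maximal consistent extended sequent with the witness
property. `exF` is the formula ∃X φ, `inst K` is φ[X:=K] for a relational
constant K, `val K ∈ G` its canonical interpretation, and `SatAt O` is
`M,v[X:=O] ⊨ φ`. -/
theorem stmt13_exists2_truth_lemma [DecidableEq Form]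
    {R RCon : Type*}
    (Der : Finset Form → Finset Form → Prop)
    (Γ Δ : Set Form) (G : Set R)
    (exF : Form) (inst : RCon → Form) (val : RCon → R)
    (SatAt : R → Prop)
    -- canonical interpretation: relational constants name all of G
    (hvalG : ∀ K, val K ∈ G)
    (hnames : ∀ O ∈ G, ∃ K, val K = O)
    -- witness property for ∃X φ ∈ Γ
    (hwit : exF ∈ Γ → ∃ K, inst K ∈ Γ)
    -- induction hypotheses for the instances of φ
    (ih₁ : ∀ K, inst K ∈ Γ → SatAt (val K))
    (ih₂ : ∀ K, SatAt (val K) → inst K ∉ Δ)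
    -- Prop41-style consequence of internal maximality (right-hand side)
    (hmaxR : ∀ K, inst K ∉ Δ →
      ∃ Θ Λ : Finset Form, ↑Θ ⊆ Γ ∧ ↑Λ ⊆ Δ ∧ Der Θ (insert (inst K) Λ))
    -- closure under the rule (⇒∃²)
    (hexR : ∀ (K : RCon) (Θ Λ : Finset Form),
      Der Θ (insert (inst K) Λ) → Der Θ (insert exF Λ))
    (hcon : SCon Der Γ Δ) :
    (exF ∈ Γ → ∃ O ∈ G, SatAt O) ∧ ((∃ O ∈ G, SatAt O) → exF ∉ Δ) := by
  constructor
  · intro h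
    obtain ⟨K, hK⟩ := hwit h
    exact ⟨val K, hvalG K, ih₁ K hK⟩
  · rintro ⟨O, hOG, hO⟩ hΔ
    obtain ⟨K, rfl⟩ := hnames O hOG
    obtain ⟨Θ, Λ, hΘ, hΛ, hDer⟩ := hmaxR K (ih₂ K hO)
    have := hexR K Θ Λ hDer
    refine hcon Θ (insert exF Λ) hΘ ?_ this
    intro x hx
    rcases Finset.mem_insert.mp (by exact_mod_cast hx) with rfl | hx'
    · exact hΔ
    · exact hΛ hx'

end Stmt13
end

section
/- Truth-lemma case for second-order identity in Γ: suppose (Γ, Δ) is S-consistent and internally S-maximal, the calculus has weakening and the rule (=²⇒), and for atoms the induction hypothesis holds (𝒜 ∈ Γ → Sat 𝒜, 𝒜 ∈ Δ → ¬Sat 𝒜). If X = Y ∈ Γ then for all tuples ō of canonical-domain elements, either both X(ō), Y(ō) ∈ Γ or both X(ō), Y(ō) ∈ Δ; consequently v(X) = v(Y), i.e., M,v ⊨ X = Y. -/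
namespace Stmt15

/-- Formulas of the relevant fragment: relational atoms `Z(ō)` over
canonical-domain elements, second-order identities, and other formulas. -/
inductive Form (RVar K Other : Type) (n : ℕ) : Type where
  | atom : RVar → (Fin n → K) → Form RVar K Other n
  | eq : RVar → RVar → Form RVar K Other n
  | other : Other → Form RVar K Other n
  deriving DecidableEq

variable {RVar K Other : Type} {n : ℕ}

/-- S-consistency of an extended sequent (Γ, Δ). -/
def SCon [DecidableEq RVar] [DecidableEq K] [DecidableEq Other]
    (Der : Finset (Form RVar K Other n) → Finset (Form RVar K Other n) → Prop)
    (Γ Δ : Set (Form RVar K Other n)) : Prop :=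
  ∀ Θ Λ : Finset (Form RVar K Other n), ↑Θ ⊆ Γ → ↑Λ ⊆ Δ → ¬ Der Θ Λ

/-- truth-lemma case for a second-order identity occurring
in Γ: if X = Y ∈ Γ then, for every tuple ō, the atoms X(ō) and Y(ō) are
both in Γ or both in Δ; consequently, with canonical valuation
v(Z) = {ō : Z(ō) ∈ Γ}, we get v(X) = v(Y). -/
theorem stmt15_soi_gamma_truth_lemma
    [DecidableEq RVar] [DecidableEq K] [DecidableEq Other]
    (Der : Finset (Form RVar K Other n) → Finset (Form RVar K Other n) → Prop)
    -- closure under weakening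
    (hweak : ∀ {Θ Λ Θ' Λ' : Finset (Form RVar K Other n)},
      Der Θ Λ → Θ ⊆ Θ' → Λ ⊆ Λ' → Der Θ' Λ')
    -- the rule (=²⇒)
    (heqL : ∀ (X Y : RVar) (o : Fin n → K) (Θ Λ : Finset (Form RVar K Other n)),
      Der Θ (insert (Form.atom X o) (insert (Form.atom Y o) Λ)) →
      Der (insert (Form.atom X o) (insert (Form.atom Y o) Θ)) Λ →
      Der (insert (Form.eq X Y) Θ) Λ)
    (Γ Δ : Set (Form RVar K Other n))
    (hcon : SCon Der Γ Δ)
    -- Prop41-style consequences of internal maximality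
    (hmaxL : ∀ χ : Form RVar K Other n, χ ∉ Γ →
      ∃ Θ Λ : Finset (Form RVar K Other n), ↑Θ ⊆ Γ ∧ ↑Λ ⊆ Δ ∧ Der (insert χ Θ) Λ)
    (hmaxR : ∀ χ : Form RVar K Other n, χ ∉ Δ →
      ∃ Θ Λ : Finset (Form RVar K Other n), ↑Θ ⊆ Γ ∧ ↑Λ ⊆ Δ ∧ Der Θ (insert χ Λ))
    -- induction hypothesis for atoms: Γ and Δ do not overlap on atoms
    (hatoms : ∀ (Z : RVar) (o : Fin n → K), Form.atom Z o ∈ Δ → Form.atom Z o ∉ Γ)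
    (X Y : RVar) (h : Form.eq X Y ∈ Γ) :
    (∀ o : Fin n → K,
      (Form.atom X o ∈ Γ ∧ Form.atom Y o ∈ Γ) ∨
      (Form.atom X o ∈ Δ ∧ Form.atom Y o ∈ Δ)) ∧
    {o : Fin n → K | Form.atom X o ∈ Γ} = {o : Fin n → K | Form.atom Y o ∈ Γ} := by
  have main : ∀ o : Fin n → K,
      (Form.atom X o ∈ Γ ∧ Form.atom Y o ∈ Γ) ∨
      (Form.atom X o ∈ Δ ∧ Form.atom Y o ∈ Δ) := by
    intro o
    by_contra hno
    push_neg at hno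
    obtain ⟨hG, hD⟩ := hno
    -- some atom is missing from Γ
    have hmissG : ∃ χ ∈ ({Form.atom X o, Form.atom Y o} : Set _), χ ∉ Γ := by
      by_cases hx : Form.atom X o ∈ Γ
      · exact ⟨Form.atom Y o, by simp, hG hx⟩
      · exact ⟨Form.atom X o, by simp, hx⟩
    have hmissD : ∃ χ ∈ ({Form.atom X o, Form.atom Y o} : Set _), χ ∉ Δ := by
      by_cases hx : Form.atom X o ∈ Δ
      · exact ⟨Form.atom Y o, by simp, hD hx⟩
      · exact ⟨Form.atom X o, by simp, hx⟩
    obtain ⟨χ₁, hχ₁mem, hχ₁⟩ := hmissG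
    obtain ⟨χ₂, hχ₂mem, hχ₂⟩ := hmissD
    obtain ⟨Θ₁, Λ₁, hΘ₁, hΛ₁, d₁⟩ := hmaxL χ₁ hχ₁
    obtain ⟨Θ₂, Λ₂, hΘ₂, hΛ₂, d₂⟩ := hmaxR χ₂ hχ₂
    set Θ := Θ₁ ∪ Θ₂
    set Λ := Λ₁ ∪ Λ₂
    have hΘ : ↑Θ ⊆ Γ := by
      simp only [Θ, Finset.coe_union]; exact Set.union_subset hΘ₁ hΘ₂
    have hΛ : ↑Λ ⊆ Δ := by
      simp only [Λ, Finset.coe_union]; exact Set.union_subset hΛ₁ hΛ₂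
    have subχ : ∀ χ ∈ ({Form.atom X o, Form.atom Y o} : Set _),
        ∀ S : Finset (Form RVar K Other n),
        insert χ S ⊆ insert (Form.atom X o) (insert (Form.atom Y o) S) := by
      intro χ hχ S
      rcases hχ with h' | h' <;> subst h' <;> intro a ha <;>
        simp only [Finset.mem_insert] at ha ⊢ <;> tauto
    have dL : Der (insert (Form.atom X o) (insert (Form.atom Y o) Θ)) Λ := by
      refine hweak d₁ ?_ Finset.subset_union_left
      exact (Finset.insert_subset_insert _ (Finset.subset_union_left)).trans
          (subχ χ₁ hχ₁mem Θ)
    have dR : Der Θ (insert (Form.atom X o) (insert (Form.atom Y o) Λ)) := by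
      refine hweak d₂ Finset.subset_union_right ?_
      exact (Finset.insert_subset_insert _ (Finset.subset_union_right)).trans
          (subχ χ₂ hχ₂mem Λ)
    have := heqL X Y o Θ Λ dR dL
    exact hcon (insert (Form.eq X Y) Θ) Λ
      (by rw [Finset.coe_insert]; exact Set.insert_subset h hΘ) hΛ this
  refine ⟨main, ?_⟩
  ext o
  simp only [Set.mem_setOf_eq]
  constructor
  · intro hx
    rcases main o with ⟨_, hy⟩ | ⟨hxd, _⟩
    · exact hy
    · exact absurd hx (hatoms X o hxd)
  · intro hy
    rcases main o with ⟨hx, _⟩ | ⟨_, hyd⟩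
    · exact hx
    · exact absurd hy (hatoms Y o hyd)

end Stmt15
end

section
/- In the saturation construction, extending an S-consistent finite extended sequent (Γ, Δ) with (λX ψ)(ιY φ) ∈ Δ by adding φ[Y:=B], ψ[X:=B], K = B to Δ and φ[Y:=K] to Γ (for a fresh relational constant K) preserves S-consistency, provided the calculus has weakening and the rule (⇒ι²). -/
namespace Stmt16

variable {Form : Type*}

/-- S-consistency of an extended sequent (Γ, Δ): no finite sub-sequent is
derivable. -/
def SCon (Der : Finset Form → Finset Form → Prop) (Γ Δ : Set Form) : Prop :=
  ∀ Θ Λ : Finset Form, ↑Θ ⊆ Γ → ↑Λ ⊆ Δ → ¬ Der Θ Λ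

/-- the saturation step for `(λX ψ)(ιY φ) ∈ Δ` preserves
S-consistency. `LF` is the formula (λX ψ)(ιY φ), `phiB`, `psiB`, `eqKB`,
`phiK` are φ[Y:=B], ψ[X:=B], K = B and φ[Y:=K], where K is a fresh
relational constant (`FreshK` records freshness of K in a formula). -/
theorem stmt16_saturation_preserves_consistency [DecidableEq Form]
    (Der : Finset Form → Finset Form → Prop)
    (LF phiB psiB eqKB phiK : Form)
    (FreshK : Form → Prop)
    -- closure under weakening
    (hweak : ∀ {Θ Λ Θ' Λ' : Finset Form}, Der Θ Λ → Θ ⊆ Θ' → Λ ⊆ Λ' → Der Θ' Λ')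
    -- the rule (⇒ι²), applicable when K is fresh for the side formulas
    (hiotaR : ∀ Θ Λ : Finset Form,
      (∀ χ ∈ Θ, FreshK χ) → (∀ χ ∈ Λ, FreshK χ) →
      Der Θ (insert phiB Λ) → Der Θ (insert psiB Λ) →
      Der (insert phiK Θ) (insert eqKB Λ) →
      Der Θ (insert LF Λ))
    (Γ Δ : Set Form)
    -- K is fresh: it does not occur in Γ ∪ Δ
    (hfresh : ∀ χ, χ ∈ Γ ∪ Δ → FreshK χ)
    (hLF : LF ∈ Δ)
    -- Prop41-style lemma: inconsistency of the extension yields finite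
    -- derivable sub-sequents isolating each added formula
    (hP41 : ¬ SCon Der (Γ ∪ {phiK}) (Δ ∪ {phiB, psiB, eqKB}) →
      (∃ Θ Λ : Finset Form, ↑Θ ⊆ Γ ∧ ↑Λ ⊆ Δ ∧ Der Θ (insert phiB Λ)) ∧
      (∃ Θ Λ : Finset Form, ↑Θ ⊆ Γ ∧ ↑Λ ⊆ Δ ∧ Der Θ (insert psiB Λ)) ∧
      (∃ Θ Λ : Finset Form, ↑Θ ⊆ Γ ∧ ↑Λ ⊆ Δ ∧ Der (insert phiK Θ) Λ) ∧
      (∃ Θ Λ : Finset Form, ↑Θ ⊆ Γ ∧ ↑Λ ⊆ Δ ∧ Der Θ (insert eqKB Λ)))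
    (hcon : SCon Der Γ Δ) :
    SCon Der (Γ ∪ {phiK}) (Δ ∪ {phiB, psiB, eqKB}) := by
  by_contra h
  obtain ⟨⟨Θ1, Λ1, hΘ1, hΛ1, h1⟩, ⟨Θ2, Λ2, hΘ2, hΛ2, h2⟩,
    ⟨Θ3, Λ3, hΘ3, hΛ3, h3⟩, _⟩ := hP41 h
  set Θ := Θ1 ∪ Θ2 ∪ Θ3 with hΘdef
  set Λ := Λ1 ∪ Λ2 ∪ Λ3 with hΛdef
  have hΘΓ : (↑Θ : Set Form) ⊆ Γ := by
    simp only [hΘdef, Finset.coe_union, Set.union_subset_iff]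
    exact ⟨⟨hΘ1, hΘ2⟩, hΘ3⟩
  have hΛΔ : (↑Λ : Set Form) ⊆ Δ := by
    simp only [hΛdef, Finset.coe_union, Set.union_subset_iff]
    exact ⟨⟨hΛ1, hΛ2⟩, hΛ3⟩
  have w1 : Der Θ (insert phiB Λ) :=
    hweak h1 (Finset.subset_union_left.trans Finset.subset_union_left)
      (Finset.insert_subset_insert _
        (Finset.subset_union_left.trans Finset.subset_union_left))
  have w2 : Der Θ (insert psiB Λ) :=
    hweak h2 (Finset.subset_union_right.trans Finset.subset_union_left)
      (Finset.insert_subset_insert _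
        (Finset.subset_union_right.trans Finset.subset_union_left))
  have w3 : Der (insert phiK Θ) (insert eqKB Λ) :=
    hweak h3 (Finset.insert_subset_insert _ Finset.subset_union_right)
      (Finset.subset_union_right.trans (Finset.subset_insert _ _))
  have hder : Der Θ (insert LF Λ) :=
    hiotaR Θ Λ (fun χ hχ => hfresh χ (Or.inl (hΘΓ hχ)))
      (fun χ hχ => hfresh χ (Or.inr (hΛΔ hχ))) w1 w2 w3
  exact hcon Θ (insert LF Λ) hΘΓ
    (by rw [Finset.coe_insert]; exact Set.insert_subset hLF hΛΔ) hder

end Stmt16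
end

section
/- Semantic validity of the characteristic Russellian equivalence for second-order descriptions restricted to atomic ψ: in any general model, M,v ⊨ (λX ψ)(ιY φ) if and only if there exists O ∈ G such that M,v[X:=O] ⊨ ψ, M,v[X:=O] ⊨ φ[Y:=X], and for all O' ∈ G, M,v[Y:=O'] ⊨ φ implies O' = O; equivalently, M,v ⊨ ∃X(∀Y(φ ↔ Y = X) ∧ ψ) where Y = X is interpreted extensionally and the quantifiers range over G. -/
/-- in any general model, the λι-clause for `(λX ψ)(ιY φ)` is
equivalent to the Russellian unpacking `∃X(∀Y(φ ↔ Y = X) ∧ ψ)`, with the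
second-order quantifiers ranging over the domain `G` of the general model and
`Y = X` interpreted extensionally. -/
theorem stmt17_russellian_equivalence
    {D : Type*} {n : ℕ} {Var : Type*} [DecidableEq Var] {Form : Type*}
    (Sat : (Var → Set (Fin n → D)) → Form → Prop)
    (G : Set (Set (Fin n → D)))
    (X Y : Var) (φ ψ φYX : Form)
    -- substitution lemma: `φ[Y:=X]` at `w` iff `φ` at `w[Y := w X]`
    (hsub : ∀ w : Var → Set (Fin n → D),
      Sat w φYX ↔ Sat (Function.update w Y (w X)) φ)
    -- `X` does not occur free in `φ`
    (hXfresh : ∀ (w : Var → Set (Fin n → D)) (O : Set (Fin n → D)),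
      Sat (Function.update w X O) φ ↔ Sat w φ)
    (v : Var → Set (Fin n → D)) :
    -- the λι clause
    (∃ O ∈ G, Sat (Function.update v X O) ψ ∧
        Sat (Function.update v X O) φYX ∧
        ∀ O' ∈ G, Sat (Function.update v Y O') φ → O' = O) ↔
    -- the Russellian unpacking ∃X(∀Y(φ ↔ Y = X) ∧ ψ)
    (∃ O ∈ G,
      (∀ O' ∈ G,
        (Sat (Function.update (Function.update v X O) Y O') φ ↔ O' = O)) ∧
      Sat (Function.update v X O) ψ) := by
  by_cases hXY : X = Y
  · subst hXY
    constructor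
    · rintro ⟨O, hO, hψ, hι, huniq⟩
      have hφ : Sat v φ := by
        have h := (hsub _).mp hι
        rw [Function.update_self, Function.update_idem] at h
        exact (hXfresh v O).mp h
      refine ⟨O, hO, fun O' hO' => ?_, hψ⟩
      constructor
      · intro _
        exact huniq O' hO' ((hXfresh v O').mpr hφ)
      · intro _
        rw [Function.update_idem]
        exact (hXfresh v O').mpr hφ
    · rintro ⟨O, hO, hiff, hψ⟩
      have hφ : Sat v φ := by
        have h := (hiff O hO).mpr rfl
        rw [Function.update_idem] at h
        exact (hXfresh v O).mp h
      refine ⟨O, hO, hψ, ?_, ?_⟩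
      · rw [hsub, Function.update_self, Function.update_idem]
        exact (hXfresh v O).mpr hφ
      · intro O' hO' h
        exact (hiff O' hO').mp (by rw [Function.update_idem]; exact (hXfresh v O').mpr hφ)
  · constructor
    · rintro ⟨O, hO, hψ, hι, huniq⟩
      have hφO : Sat (Function.update v Y O) φ := by
        have h := (hsub _).mp hι
        rw [Function.update_self, Function.update_comm hXY] at h
        exact (hXfresh _ O).mp h
      refine ⟨O, hO, fun O' hO' => ?_, hψ⟩
      rw [Function.update_comm hXY, hXfresh]
      constructor
      · exact huniq O' hO'
      · rintro rfl; exact hφO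
    · rintro ⟨O, hO, hiff, hψ⟩
      have hφO : Sat (Function.update v Y O) φ := by
        have h := (hiff O hO).mpr rfl
        rw [Function.update_comm hXY, hXfresh] at h
        exact h
      refine ⟨O, hO, hψ, ?_, ?_⟩
      · rw [hsub, Function.update_self, Function.update_comm hXY, hXfresh]
        exact hφO
      · intro O' hO' h
        exact (hiff O' hO').mp (by rw [Function.update_comm hXY, hXfresh]; exact h)
end
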